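/- The matrices G₁ and G₂ satisfy the braid relation: G₁·G₂·G₁ = G₂·G₁·G₂. -/

import Mathlib

open Complex Matrix

/-- `t = (√2/2)·e^{2iπ/3}` -/
noncomputable def t : ℂ := ((Real.sqrt 2 : ℂ) / 2) * Complex.exp (2 * (Real.pi : ℂ) * Complex.I / 3)

/-- `G₁ = e^{iπ/9}·diag(2t̄², 2t², −2t̄²)` -/
noncomputable def G₁ : Matrix (Fin 3) (Fin 3) ℂ :=
  Complex.exp ((Real.pi : ℂ) * Complex.I / 9) •
    Matrix.diagonal ![2 * (starRingEnd ℂ t) ^ 2, 2 * t ^ 2, -(2 * (starRingEnd ℂ t) ^ 2)]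

/-- `G₂ = e^{iπ/9}·[[t², t, −t²], [t, 0, t], [−t², t, t²]]` -/
noncomputable def G₂ : Matrix (Fin 3) (Fin 3) ℂ :=
  Complex.exp ((Real.pi : ℂ) * Complex.I / 9) •
    !![t ^ 2, t, -t ^ 2; t, 0, t; -t ^ 2, t, t ^ 2]

lemma hsq : ((Real.sqrt 2 : ℝ) : ℂ) ^ 2 = 2 := by
  norm_cast
  exact Real.sq_sqrt (by norm_num)

lemma hst : (starRingEnd ℂ) t * t = 1 / 2 := by
  have hc : (starRingEnd ℂ) (2 * (Real.pi : ℂ) * Complex.I / 3)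
      = -(2 * (Real.pi : ℂ) * Complex.I / 3) := by
    simp [map_div₀, map_ofNat]
    ring
  rw [t, _root_.map_mul, map_div₀, ← Complex.exp_conj, hc, Complex.conj_ofReal, map_ofNat]
  have h : ((Real.sqrt 2 : ℝ) : ℂ) / 2 * Complex.exp (-(2 * (Real.pi:ℂ) * Complex.I / 3)) *
      (((Real.sqrt 2 : ℝ) : ℂ) / 2 * Complex.exp (2 * (Real.pi:ℂ) * Complex.I / 3))
      = ((Real.sqrt 2 : ℝ) : ℂ)^2 / 4 *
        (Complex.exp (-(2 * (Real.pi:ℂ) * Complex.I / 3)) * Complex.exp (2 * (Real.pi:ℂ) * Complex.I / 3)) := by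
    ring
  rw [h, ← Complex.exp_add, hsq]
  norm_num

lemma ht6 : t ^ 6 = 1 / 8 := by
  rw [t, mul_pow, div_pow, ← Complex.exp_nat_mul]
  have h1 : (6 : ℕ) * (2 * (Real.pi:ℂ) * Complex.I / 3)
      = 2 * (Real.pi:ℂ) * Complex.I + 2 * (Real.pi:ℂ) * Complex.I := by
    push_cast; ring
  have h2 : ((Real.sqrt 2 : ℝ) : ℂ) ^ 6 = 8 := by
    have h3 : ((Real.sqrt 2 : ℝ) : ℂ) ^ 6 = (((Real.sqrt 2 : ℝ) : ℂ) ^ 2) ^ 3 := by ring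
    rw [h3, hsq]; norm_num
  rw [h1, Complex.exp_add, Complex.exp_two_pi_mul_I, h2]
  norm_num

theorem stmt3 : G₁ * G₂ * G₁ = G₂ * G₁ * G₂ := by
  have h1 := hst
  have h2 := ht6
  set E := Complex.exp ((Real.pi : ℂ) * Complex.I / 9) with hE
  set s := (starRingEnd ℂ) t with hs
  ext i j
  fin_cases i <;> fin_cases j <;>
    simp only [G₁, G₂, Matrix.mul_apply, Fin.sum_univ_three, Matrix.smul_apply, ← hE, ← hs] <;>
    simp [G₁, G₂, Matrix.mul_apply, Fin.sum_univ_three, Matrix.smul_apply,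
      Matrix.diagonal_apply, Fin.ext_iff, Matrix.vecMul_diagonal, ← hE, ← hs] <;>
    first
    | ring1
    | linear_combination (E^3*(4*s^2*(s*t+1/2) + 4*t^4*(2*t*s+1))) * h1 - E^3*8*s^2 * h2
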